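/- (Leave-one-task-out shortcut for two-step kernel ridge regression, Setting C.) Let q ≥ 2, let K be an m×m and G a q×q symmetric positive semidefinite real matrix, Y ∈ ℝ^{m×q}, λ_d, λ_t > 0, H^k = K(K + λ_d I)⁻¹, and H^g = G(G + λ_t I)⁻¹. Fix a task index j; let G^{(j)} be G with row j and column j deleted, Y^{(·,j)} be Y with column j deleted, and γ_j ∈ ℝ^{q−1} be the j-th column of G with its j-th entry deleted. Then H^k Y^{(·,j)} (G^{(j)} + λ_t I)⁻¹ γ_j = H^k (Y H^g_{·j} − Y_{·j} H^g_{jj}) / (1 − H^g_{jj}), where H^g_{·j} denotes the j-th column of H^g and Y_{·j} the j-th column of Y. -/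

import Mathlib

open Matrix

/-- leave-one-task-out shortcut for two-step KRR, Setting C:
training the two-step model on the `q−1` tasks other than `j` and predicting
at task `j` across all `m` instances gives
`H^k (Y H^g_{·j} − Y_{·j} H^g_{jj}) / (1 − H^g_{jj})`. -/
theorem two_step_krr_stmt16 {m q : ℕ} (hq : 2 ≤ q)
    (K : Matrix (Fin m) (Fin m) ℝ) (hK : K.PosSemidef)
    (G : Matrix (Fin q) (Fin q) ℝ) (hG : G.PosSemidef)
    (Y : Matrix (Fin m) (Fin q) ℝ) (ld lt : ℝ) (hld : 0 < ld) (hlt : 0 < lt)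
    (j : Fin q)
    (Hk : Matrix (Fin m) (Fin m) ℝ) (hHk : Hk = K * (K + ld • 1)⁻¹)
    (Hg : Matrix (Fin q) (Fin q) ℝ) (hHg : Hg = G * (G + lt • 1)⁻¹)
    (Gdel : Matrix {x : Fin q // x ≠ j} {x : Fin q // x ≠ j} ℝ)
    (hGdel : Gdel = G.submatrix (fun x => x.val) (fun x => x.val))
    (Ydel : Matrix (Fin m) {x : Fin q // x ≠ j} ℝ)
    (hYdel : Ydel = Y.submatrix id (fun x => x.val))
    (γ : {x : Fin q // x ≠ j} → ℝ) (hγ : γ = fun x => G x.val j) :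
    Hk *ᵥ ((Ydel * (Gdel + lt • 1)⁻¹) *ᵥ γ)
      = fun i => (Hk *ᵥ (fun r => (Y * Hg) r j - Y r j * Hg j j)) i / (1 - Hg j j) := by
  classical
  -- the regularized task matrix and its inverse
  set A : Matrix (Fin q) (Fin q) ℝ := G + lt • 1 with hAdef
  have h1pd : ((lt • 1 : Matrix (Fin q) (Fin q) ℝ)).PosDef := by
    rw [Matrix.smul_one_eq_diagonal]
    exact Matrix.PosDef.diagonal (fun _ => hlt)
  have hA : A.PosDef := Matrix.PosDef.posSemidef_add hG h1pd
  set B : Matrix (Fin q) (Fin q) ℝ := A⁻¹ with hBdef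
  have hB : B.PosDef := hA.inv
  have hAB : A * B = 1 := Matrix.mul_nonsing_inv A (isUnit_iff_ne_zero.mpr hA.det_pos.ne')
  -- diagonal entry of B is positive
  have hBjj : 0 < B j j := by
    have h := hB.dotProduct_mulVec_pos (x := Pi.single j 1) (by
      intro h
      have := congrFun h j
      simp at this)
    simpa [dotProduct, Matrix.mulVec, Pi.single_apply, Finset.sum_ite_eq,
      Finset.sum_ite_eq'] using h
  -- Hg in terms of B
  have hHgB : Hg = 1 - lt • B := by
    have hGA : G = A - lt • 1 := by simp [hAdef]
    rw [hHg, hGA]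
    rw [Matrix.sub_mul, Matrix.smul_mul, Matrix.one_mul, hAB]
  have hHgjj : Hg j j = 1 - lt * B j j := by
    rw [hHgB]; simp [Matrix.sub_apply, Matrix.one_apply]
  have hden : 1 - Hg j j = lt * B j j := by rw [hHgjj]; ring
  have hdenne : (1 - Hg j j) ≠ 0 := by
    rw [hden]; positivity
  have hBjjne : B j j ≠ 0 := ne_of_gt hBjj
  -- the deleted regularized matrix is a submatrix of A
  have hAdel : Gdel + lt • 1 = A.submatrix (fun x : {x : Fin q // x ≠ j} => x.val)
      (fun x => x.val) := by
    rw [hGdel, hAdef]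
    ext x y
    by_cases h : x = y
    · subst h; simp [Matrix.one_apply, Matrix.submatrix_apply, Matrix.add_apply]
    · have : (x : Fin q) ≠ (y : Fin q) := fun hxy => h (Subtype.ext hxy)
      simp [Matrix.one_apply, Matrix.submatrix_apply, Matrix.add_apply, h, this]
  have hAdelpd : (Gdel + lt • 1).PosDef := by
    rw [hGdel]
    refine Matrix.PosDef.posSemidef_add (hG.submatrix _) ?_
    rw [Matrix.smul_one_eq_diagonal]
    exact Matrix.PosDef.diagonal (fun _ => hlt)
  -- the candidate solution
  set w : {x : Fin q // x ≠ j} → ℝ := fun x => - B x.val j / B j j with hwdef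
  -- sums over the subtype equal sums over `univ.erase j`
  have hsum : ∀ f : Fin q → ℝ, ∑ x : {x : Fin q // x ≠ j}, f x.val
      = (∑ x, f x) - f j := by
    intro f
    rw [← Finset.sum_subtype (Finset.univ.erase j)
      (fun x => by simp [Finset.mem_erase]) f]
    exact Finset.sum_erase_eq_sub (Finset.mem_univ j)
  -- entries of A*B = 1
  have hABentry : ∀ x y : Fin q, ∑ z, A x z * B z y = (1 : Matrix (Fin q) (Fin q) ℝ) x y := by
    intro x y
    have := congrFun (congrFun hAB x) y
    simpa [Matrix.mul_apply] using this
  -- the deleted system is solved by w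
  have hkey : (Gdel + lt • 1) *ᵥ w = γ := by
    funext x
    have hx : (x : Fin q) ≠ j := x.2
    have hAxj : A x.val j = G x.val j := by
      simp [hAdef, Matrix.add_apply, Matrix.one_apply, hx]
    have hsum1 : ∑ y : {y : Fin q // y ≠ j}, A x.val y.val * (- B y.val j)
        = A x.val j * B j j := by
      have := hsum (fun y => A x.val y * (- B y j))
      rw [this]
      have h2 : ∑ y, A x.val y * (- B y j) = - ∑ y, A x.val y * B y j := by
        simp [Finset.sum_neg_distrib, mul_neg]
      rw [h2, hABentry x.val j]
      simp [Matrix.one_apply, hx]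
    rw [hAdel]
    simp only [Matrix.mulVec, dotProduct, Matrix.submatrix_apply, hwdef, hγ]
    calc ∑ y : {y : Fin q // y ≠ j}, A x.val y.val * (- B y.val j / B j j)
        = (∑ y : {y : Fin q // y ≠ j}, A x.val y.val * (- B y.val j)) / B j j := by
          rw [Finset.sum_div]
          exact Finset.sum_congr rfl (fun y _ => by ring)
      _ = A x.val j * B j j / B j j := by rw [hsum1]
      _ = G x.val j := by rw [hAxj]; field_simp
  -- hence the inverse applied to γ is w
  have hinv : (Gdel + lt • 1)⁻¹ *ᵥ γ = w := by
    rw [← hkey, Matrix.mulVec_mulVec, Matrix.nonsing_inv_mul _ (isUnit_iff_ne_zero.mpr hAdelpd.det_pos.ne'),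
      Matrix.one_mulVec]
  -- compute Ydel *ᵥ w
  have hYw : Ydel *ᵥ w = (1 - Hg j j)⁻¹ • (fun r => (Y * Hg) r j - Y r j * Hg j j) := by
    funext r
    have hYB : (Y * Hg) r j - Y r j * Hg j j = lt * (Y r j * B j j - (Y * B) r j) := by
      rw [hHgB]
      simp only [Matrix.mul_sub, Matrix.mul_smul, Matrix.mul_one, Matrix.sub_apply,
        Matrix.smul_apply, smul_eq_mul, Matrix.one_apply_eq]
      ring
    have hYwr : (Ydel *ᵥ w) r = (Y r j * B j j - (Y * B) r j) / B j j := by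
      simp only [Matrix.mulVec, dotProduct, hYdel, Matrix.submatrix_apply, id_eq, hwdef]
      rw [hsum (fun x => Y r x * (- B x j / B j j))]
      have h3 : (Y * B) r j = ∑ x, Y r x * B x j := by simp [Matrix.mul_apply]
      rw [h3]
      simp only [neg_div, mul_neg, mul_div_assoc, Finset.sum_neg_distrib, ← Finset.sum_div]
      field_simp
      rw [← Finset.sum_div]
      field_simp
      ring
    rw [hYwr]
    simp only [Pi.smul_apply, smul_eq_mul, hYB, hden]
    field_simp
  -- put everything together
  rw [← Matrix.mulVec_mulVec, hinv, hYw, Matrix.mulVec_smul]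
  funext i
  simp [div_eq_inv_mul]
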